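/- arXiv:1702.02511 — 3 statements merged into one kernel-verified Lean document; each statement's English description precedes it below -/
import Mathlib

section
/- Let $S_1,\dots,S_{n+1}$ be the spacings of $n$ i.i.d. uniform points on $[0,s]$, and let $0 < d < s$ with $n_{\min} = \lfloor s/d \rfloor$ (at most that many spacings can exceed $d$). Then the probability that all $n+1$ spacings are at most $d$ equals $p_{\mathrm{mon}} = 1 - \sum_{k=1}^{n_{\min}} (-1)^{k-1} \binom{n+1}{k} \left(1 - k\frac{d}{s}\right)^n$. -/
open MeasureTheory Finset Nat
open scoped ENNReal

noncomputable def unif (s : ℝ) : Measure ℝ :=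
  (ENNReal.ofReal s⁻¹) • (volume.restrict (Set.Icc 0 s))

noncomputable def iidUnif (n : ℕ) (s : ℝ) : Measure (Fin n → ℝ) :=
  Measure.pi fun _ => unif s

noncomputable def orderStat {n : ℕ} (x : Fin n → ℝ) : Fin n → ℝ :=
  x ∘ Tuple.sort x

noncomputable def slack (n : ℕ) (s : ℝ) (x : Fin n → ℝ) (i : Fin (n + 1)) : ℝ :=
  (if h : (i : ℕ) < n then orderStat x ⟨i, h⟩ else s) -
  (if h : 0 < (i : ℕ) then orderStat x ⟨(i : ℕ) - 1, by have := i.isLt; omega⟩ else 0)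

theorem orderStat_eq {n : ℕ} (x : Fin n → ℝ) (σ : Equiv.Perm (Fin n))
    (h : Monotone (x ∘ σ)) : orderStat x = x ∘ σ :=
  (Tuple.comp_sort_eq_comp_iff_monotone.mpr h).symm

theorem measurable_orderStat {n : ℕ} (i : Fin n) :
    Measurable (fun x : Fin n → ℝ => orderStat x i) := by
  apply measurable_of_Iic
  intro a
  have key : ∀ x : Fin n → ℝ, orderStat x i ≤ a ↔
      (i : ℕ) < (Finset.univ.filter fun j => x j ≤ a).card := by
    intro x
    rw [← Tuple.lt_card_le_iff_apply_le_of_monotone (f := orderStat x) (a := a) (j := i) (Tuple.monotone_sort x)]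
    have : Fintype.card {j // orderStat x j ≤ a} = Fintype.card {j // x j ≤ a} :=
      Fintype.card_congr (Equiv.subtypeEquiv (Tuple.sort x) (fun j => Iff.rfl))
    rw [← Fintype.card_subtype, this, Fintype.card_subtype]
  have : (fun x : Fin n → ℝ => orderStat x i) ⁻¹' (Set.Iic a) =
      (fun x : Fin n → ℝ => (Finset.univ.filter fun j => x j ≤ a).card) ⁻¹' {m | (i:ℕ) < m} := by
    ext x; simp [key x]
  rw [this]
  have hm : Measurable (fun x : Fin n → ℝ => (Finset.univ.filter fun j => x j ≤ a).card) := by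
    simp_rw [Finset.card_filter]
    apply Finset.measurable_sum
    intro j _
    exact Measurable.ite (measurableSet_le (measurable_pi_apply j) measurable_const)
      measurable_const measurable_const
  exact hm (by exact MeasurableSet.of_discrete)

theorem measurable_slack {n : ℕ} (s : ℝ) (i : Fin (n+1)) :
    Measurable (fun x : Fin n → ℝ => slack n s x i) := by
  unfold slack
  apply Measurable.sub
  · split_ifs with h
    · exact measurable_orderStat _
    · exact measurable_const
  · split_ifs with h
    · exact measurable_orderStat _
    · exact measurable_const

def cham {n : ℕ} (σ : Equiv.Perm (Fin n)) : Set (Fin n → ℝ) := {x | StrictMono (x ∘ σ)}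

theorem measurableSet_cham {n : ℕ} (σ : Equiv.Perm (Fin n)) : MeasurableSet (cham σ) := by
  have : cham σ = ⋂ (p : Fin n × Fin n), ⋂ (_ : p.1 < p.2), {x : Fin n → ℝ | x (σ p.1) < x (σ p.2)} := by
    ext x
    simp only [cham, Set.mem_setOf_eq, Set.mem_iInter]
    constructor
    · intro h p hp; exact h hp
    · intro h a b hab; exact h (a, b) hab
  rw [this]
  exact MeasurableSet.iInter fun p => MeasurableSet.iInter fun _ =>
    measurableSet_lt (measurable_pi_apply _) (measurable_pi_apply _)

theorem cham_inj {n : ℕ} {σ : Equiv.Perm (Fin n)} {x : Fin n → ℝ} (h : x ∈ cham σ) :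
    Function.Injective x := by
  have h1 : Function.Injective (x ∘ σ) := h.injective
  have : x = (x ∘ σ) ∘ σ.symm := by ext j; simp
  rw [this]
  exact h1.comp σ.symm.injective

theorem cham_disjoint {n : ℕ} {σ τ : Equiv.Perm (Fin n)} (hστ : σ ≠ τ) :
    Disjoint (cham σ) (cham τ) := by
  rw [Set.disjoint_left]
  intro x hσ hτ
  apply hστ
  have h1 : x ∘ σ = x ∘ τ := Tuple.unique_monotone hσ.monotone hτ.monotone
  have hx : Function.Injective x := cham_inj hσ
  apply Equiv.ext; intro j
  exact hx (congrFun h1 j)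

theorem mem_cham_sort {n : ℕ} {x : Fin n → ℝ} (hx : Function.Injective x) :
    x ∈ cham (Tuple.sort x) := by
  have hmono : Monotone (x ∘ Tuple.sort x) := Tuple.monotone_sort x
  exact hmono.strictMono_of_injective (hx.comp (Tuple.sort x).injective)

theorem orderStat_mem_cham {n : ℕ} {σ : Equiv.Perm (Fin n)} {x : Fin n → ℝ} (h : x ∈ cham σ) :
    orderStat x = x ∘ σ :=
  orderStat_eq x σ h.monotone

theorem volume_pi_eq (n : ℕ) : (volume : Measure (Fin n → ℝ)) = Measure.pi fun _ => volume := rfl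

theorem volume_diag_zero {m : ℕ} (i j : Fin (m+1)) (hij : i ≠ j) :
    volume {x : Fin (m+1) → ℝ | x i = x j} = 0 := by
  obtain ⟨k, hk⟩ : ∃ k, i.succAbove k = j := Fin.exists_succAbove_eq (Ne.symm hij)
  have hmp := measurePreserving_piFinSuccAbove (fun _ : Fin (m+1) => (volume : Measure ℝ)) i
  set e := MeasurableEquiv.piFinSuccAbove (fun _ : Fin (m+1) => ℝ) i
  have hS' : MeasurableSet {p : ℝ × (Fin m → ℝ) | p.1 = p.2 k} :=
    measurableSet_eq_fun measurable_fst ((measurable_pi_apply k).comp measurable_snd)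
  have hpre : {x : Fin (m+1) → ℝ | x i = x j} = e ⁻¹' {p : ℝ × (Fin m → ℝ) | p.1 = p.2 k} := by
    ext x
    simp only [Set.mem_setOf_eq, Set.mem_preimage, e, MeasurableEquiv.piFinSuccAbove]
    subst hk
    exact Iff.rfl
  rw [volume_pi_eq, hpre, hmp.measure_preimage hS'.nullMeasurableSet]
  rw [Measure.prod_apply hS']
  have h0 : ∀ a : ℝ, (Measure.pi fun _ : Fin m => (volume : Measure ℝ))
      {y : Fin m → ℝ | y k = a} = 0 := fun a => Measure.pi_hyperplane (fun _ : Fin m => (volume : Measure ℝ)) k a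
  have : ∀ a : ℝ, (Measure.pi fun _ : Fin m => (volume : Measure ℝ))
      (Prod.mk a ⁻¹' {p : ℝ × (Fin m → ℝ) | p.1 = p.2 k}) = 0 := by
    intro a
    have he : (Prod.mk a ⁻¹' {p : ℝ × (Fin m → ℝ) | p.1 = p.2 k}) = {y : Fin m → ℝ | y k = a} := by
      ext y; simp [eq_comm]
    rw [he]; exact h0 a
  have : ∀ x : ℝ, (Measure.pi fun _ : Fin m => (volume : Measure ℝ)) {a : Fin m → ℝ | x = a k} = 0 := by
    intro x
    have he : {a : Fin m → ℝ | x = a k} = {y : Fin m → ℝ | y k = x} := by ext y; simp [eq_comm]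
    rw [he]; exact h0 x
  simp [this]

theorem volume_noninj_zero (n : ℕ) :
    volume {x : Fin n → ℝ | ¬ Function.Injective x} = 0 := by
  match n with
  | 0 =>
    have : {x : Fin 0 → ℝ | ¬ Function.Injective x} = ∅ := by
      ext x
      simp only [Set.mem_setOf_eq, Set.mem_empty_iff_false, iff_false, not_not]
      intro a b _; exact Fin.elim0 a
    rw [this]; exact measure_empty
  | m+1 =>
    refine measure_mono_null (t := ⋃ (p : Fin (m+1) × Fin (m+1)) (_ : p.1 ≠ p.2),
      {x : Fin (m+1) → ℝ | x p.1 = x p.2}) ?_ ?_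
    · intro x hx
      simp only [Set.mem_setOf_eq, Function.Injective, not_forall] at hx
      obtain ⟨a, b, hab, hne⟩ := hx
      simp only [Set.mem_iUnion]
      exact ⟨(a, b), hne, hab⟩
    · exact measure_iUnion_null fun p => measure_iUnion_null fun hp => volume_diag_zero _ _ hp

theorem volume_hyper (n : ℕ) (j : Fin n) (c : ℝ) : volume {x : Fin n → ℝ | x j = c} = 0 := by
  rw [volume_pi_eq]; exact Measure.pi_hyperplane (fun _ : Fin n => (volume : Measure ℝ)) j c

def box (n : ℕ) (s : ℝ) : Set (Fin n → ℝ) := Set.pi Set.univ fun _ => Set.Icc 0 s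

instance unif_finite (s : ℝ) : IsFiniteMeasure (unif s) := by
  constructor
  rw [unif, Measure.smul_apply, smul_eq_mul, Measure.restrict_apply_univ, Real.volume_Icc]
  exact ENNReal.mul_lt_top ENNReal.ofReal_lt_top ENNReal.ofReal_lt_top

theorem nu_eq_restrict (n : ℕ) (s : ℝ) :
    Measure.pi (fun _ : Fin n => volume.restrict (Set.Icc 0 s)) = volume.restrict (box n s) := by
  refine Measure.pi_eq fun t ht => ?_
  rw [Measure.restrict_apply (MeasurableSet.univ_pi ht)]
  have : Set.pi Set.univ t ∩ box n s = Set.pi Set.univ fun i => t i ∩ Set.Icc 0 s := by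
    rw [show box n s = Set.pi Set.univ fun _ => Set.Icc (0:ℝ) s from rfl, ← Set.pi_inter_distrib]
  rw [this, volume_pi_pi]
  exact Finset.prod_congr rfl fun i _ => (Measure.restrict_apply (ht i)).symm

theorem iidUnif_eq (n : ℕ) (s : ℝ) :
    iidUnif n s = (ENNReal.ofReal s⁻¹) ^ n • volume.restrict (box n s) := by
  rw [iidUnif, ← nu_eq_restrict]
  refine Measure.pi_eq fun t ht => ?_
  rw [Measure.smul_apply, smul_eq_mul, Measure.pi_pi]
  rw [show ((ENNReal.ofReal s⁻¹) ^ n : ℝ≥0∞) = ∏ (j : Fin n), ENNReal.ofReal s⁻¹ by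
    rw [Finset.prod_const, Finset.card_univ, Fintype.card_fin]]
  rw [← Finset.prod_mul_distrib]
  exact Finset.prod_congr rfl fun i _ => rfl

instance box_finite (n : ℕ) (s : ℝ) : IsFiniteMeasure (volume.restrict (box n s)) := by
  constructor
  rw [Measure.restrict_apply_univ, show box n s = Set.pi Set.univ fun _ => Set.Icc (0:ℝ) s from rfl, volume_pi_pi]
  exact WithTop.prod_lt_top fun i _ => (by rw [Real.volume_Icc]; exact ENNReal.ofReal_lt_top)

theorem volume_box (n : ℕ) (s : ℝ) (hs : 0 ≤ s) : volume (box n s) = ENNReal.ofReal (s ^ n) := by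
  rw [show box n s = Set.pi Set.univ fun _ => Set.Icc (0:ℝ) s from rfl, volume_pi_pi]
  simp [Real.volume_Icc, ← ENNReal.ofReal_pow hs]

def cnt {n : ℕ} (T : Finset (Fin (n+1))) (r : Fin n) : ℕ :=
  (T.filter fun t => t.val ≤ r.val).card

noncomputable def shiftVec {n : ℕ} (d : ℝ) (T : Finset (Fin (n+1))) (σ : Equiv.Perm (Fin n)) :
    Fin n → ℝ :=
  fun j => d * cnt T (σ.symm j)

theorem cnt_mono {n : ℕ} (T : Finset (Fin (n+1))) {r r' : Fin n} (h : r ≤ r') :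
    cnt T r ≤ cnt T r' := by
  unfold cnt
  apply Finset.card_le_card
  apply Finset.monotone_filter_right
  intro t _ ht
  exact le_trans ht h

theorem card_filter_eq' {n : ℕ} (T : Finset (Fin (n+1))) (a : Fin (n+1)) :
    (T.filter fun t => t.val = a.val).card = if a ∈ T then 1 else 0 := by
  have h1 : (T.filter fun t => t.val = a.val) = T.filter fun t => t = a := by
    apply Finset.filter_congr
    intro t _
    simp [Fin.ext_iff]
  rw [h1, Finset.filter_eq']
  split_ifs <;> simp

theorem cnt_succ {n : ℕ} (T : Finset (Fin (n+1))) {r r' : Fin n} (h : (r' : ℕ) = (r : ℕ) + 1) :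
    cnt T r' = cnt T r +
      (if (⟨(r : ℕ) + 1, by have := r'.isLt; omega⟩ : Fin (n+1)) ∈ T then 1 else 0) := by
  unfold cnt
  rw [← card_filter_eq' T ⟨(r : ℕ) + 1, by have := r'.isLt; omega⟩]
  rw [Finset.card_filter, Finset.card_filter, Finset.card_filter, ← Finset.sum_add_distrib]
  apply Finset.sum_congr rfl
  intro t _
  have := t.isLt
  simp only [Fin.val_mk]
  split_ifs <;> omega

theorem cnt_zero {n : ℕ} (T : Finset (Fin (n+1))) {r : Fin n} (h : (r : ℕ) = 0) :
    cnt T r = if (⟨0, Nat.succ_pos n⟩ : Fin (n+1)) ∈ T then 1 else 0 := by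
  unfold cnt
  rw [← card_filter_eq' T ⟨0, Nat.succ_pos n⟩]
  rw [Finset.card_filter, Finset.card_filter]
  apply Finset.sum_congr rfl
  intro t _
  simp only [Fin.val_mk]
  split_ifs <;> omega

theorem cnt_last {n : ℕ} (T : Finset (Fin (n+1))) {r : Fin n} (h : (r : ℕ) + 1 = n) :
    cnt T r + (if (⟨n, lt_add_one n⟩ : Fin (n+1)) ∈ T then 1 else 0) = T.card := by
  unfold cnt
  rw [← card_filter_eq' T ⟨n, lt_add_one n⟩]
  rw [Finset.card_filter, Finset.card_filter, ← Finset.sum_add_distrib,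
    Finset.card_eq_sum_ones T]
  apply Finset.sum_congr rfl
  intro t _
  have := t.isLt
  simp only [Fin.val_mk]
  split_ifs <;> omega

theorem strictMono_of_adjacent {n : ℕ} {f : Fin n → ℝ}
    (h : ∀ r r' : Fin n, (r' : ℕ) = (r : ℕ) + 1 → f r < f r') : StrictMono f := by
  have key : ∀ k : ℕ, ∀ a b : Fin n, (b : ℕ) = (a : ℕ) + k + 1 → f a < f b := by
    intro k
    induction k with
    | zero => intro a b hb; exact h a b hb
    | succ k ih =>
      intro a b hb
      have hc : (a : ℕ) + k + 1 < n := by have := b.isLt; omega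
      exact lt_trans (ih a ⟨(a : ℕ) + k + 1, hc⟩ rfl) (h ⟨(a : ℕ) + k + 1, hc⟩ b (by simp; omega))
  intro a b hab
  have : (b : ℕ) = (a : ℕ) + ((b : ℕ) - (a : ℕ) - 1) + 1 := by
    have := Fin.lt_def.mp hab; omega
  exact key _ a b this

theorem slack_cham {n : ℕ} {s : ℝ} {x : Fin n → ℝ} {σ : Equiv.Perm (Fin n)}
    (h : Monotone (x ∘ σ)) (i : Fin (n+1)) :
    slack n s x i = (if h' : (i : ℕ) < n then x (σ ⟨i, h'⟩) else s) -
      (if h' : 0 < (i : ℕ) then x (σ ⟨(i : ℕ) - 1, by have := i.isLt; omega⟩) else 0) := by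
  unfold slack
  rw [orderStat_eq x σ h]
  rfl

theorem slack_mid' {n : ℕ} {s : ℝ} {x : Fin n → ℝ} {σ : Equiv.Perm (Fin n)}
    (h : Monotone (x ∘ σ)) (i : Fin (n+1)) (h1 : 0 < (i : ℕ)) (h2 : (i : ℕ) < n) :
    slack n s x i = x (σ ⟨(i : ℕ), h2⟩) - x (σ ⟨(i : ℕ) - 1, by omega⟩) := by
  rw [slack_cham h, dif_pos h2, dif_pos h1]

theorem slack_bot' {n : ℕ} {s : ℝ} {x : Fin n → ℝ} {σ : Equiv.Perm (Fin n)}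
    (h : Monotone (x ∘ σ)) (i : Fin (n+1)) (h0 : (i : ℕ) = 0) (hn : 0 < n) :
    slack n s x i = x (σ ⟨0, hn⟩) := by
  rw [slack_cham h, dif_pos (show (i : ℕ) < n by omega), dif_neg (by omega)]
  rw [show (⟨(i : ℕ), by omega⟩ : Fin n) = ⟨0, hn⟩ from Fin.ext (by simp [h0])]
  ring

theorem slack_top' {n : ℕ} {s : ℝ} {x : Fin n → ℝ} {σ : Equiv.Perm (Fin n)}
    (h : Monotone (x ∘ σ)) (i : Fin (n+1)) (hi : (i : ℕ) = n) (hn : 0 < n) :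
    slack n s x i = s - x (σ ⟨n - 1, by omega⟩) := by
  rw [slack_cham h, dif_neg (by omega), dif_pos (by omega)]
  rw [show (⟨(i : ℕ) - 1, by have := i.isLt; omega⟩ : Fin n) = ⟨n - 1, by omega⟩ from
    Fin.ext (by simp [hi])]

theorem slack_deg {n : ℕ} {s : ℝ} {x : Fin n → ℝ} (i : Fin (n+1)) (hn : n = 0) :
    slack n s x i = s := by
  unfold slack
  rw [dif_neg (by omega), dif_neg (by omega)]
  ring

theorem heart {n : ℕ} {s d : ℝ} (hd : 0 < d) (hds : d < s)
    (T : Finset (Fin (n+1))) (σ : Equiv.Perm (Fin n)) (x : Fin n → ℝ) :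
    ((∀ j, x j ∈ Set.Ioo 0 s) ∧ StrictMono (x ∘ σ) ∧ (∀ t ∈ T, d < slack n s x t)) ↔
    ((∀ j, x j - shiftVec d T σ j ∈ Set.Ioo 0 (s - T.card * d)) ∧
      StrictMono ((fun j => x j - shiftVec d T σ j) ∘ σ)) := by
  set k := T.card with hk
  set y : Fin n → ℝ := fun j => x j - shiftVec d T σ j with hy
  have hyσ : ∀ r : Fin n, y (σ r) = x (σ r) - d * cnt T r := by
    intro r; simp [hy, shiftVec]
  constructor
  · rintro ⟨hbox, hsm, hT⟩
    have horder : Monotone (x ∘ σ) := hsm.monotone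
    have hadj : ∀ r r' : Fin n, (r' : ℕ) = (r : ℕ) + 1 → y (σ r) < y (σ r') := by
      intro r r' hrr
      have hlt : (r : ℕ) + 1 < n + 1 := by have := r'.isLt; omega
      have hsl := slack_mid' (s := s) horder ⟨(r : ℕ) + 1, hlt⟩ (by simp) (by simp; omega)
      rw [show (⟨((⟨(r : ℕ) + 1, hlt⟩ : Fin (n+1)) : ℕ), by simp; omega⟩ : Fin n) = r' from
        Fin.ext (by simp [hrr]),
        show (⟨((⟨(r : ℕ) + 1, hlt⟩ : Fin (n+1)) : ℕ) - 1, by omega⟩ : Fin n) = r from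
        Fin.ext (by simp)] at hsl
      have hcs := cnt_succ T hrr
      by_cases hmem : (⟨(r : ℕ) + 1, hlt⟩ : Fin (n+1)) ∈ T
      · have hTm := hT _ hmem
        rw [hsl] at hTm
        rw [hyσ r, hyσ r', hcs, if_pos hmem]
        push_cast
        linarith
      · have h0 : x (σ r) < x (σ r') := hsm (Fin.lt_def.mpr (by omega))
        rw [hyσ r, hyσ r', hcs, if_neg hmem]
        push_cast
        linarith
    have hsm' : StrictMono (y ∘ σ) := strictMono_of_adjacent fun r r' hrr => hadj r r' hrr
    refine ⟨?_, hsm'⟩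
    intro j
    have hn : 0 < n := by have := (σ.symm j).isLt; omega
    have hjr : y j = y (σ (σ.symm j)) := by rw [Equiv.apply_symm_apply]
    set r := σ.symm j with hr
    constructor
    · set r0 : Fin n := ⟨0, hn⟩ with hr0
      have h1 : y (σ r0) ≤ y (σ r) := hsm'.monotone (Fin.le_def.mpr (by simp [hr0]))
      have hbot := slack_bot' (s := s) horder ⟨0, Nat.succ_pos n⟩ rfl hn
      have hcz := cnt_zero T (r := r0) rfl
      rw [hyσ r0] at h1
      by_cases hmem : (⟨0, Nat.succ_pos n⟩ : Fin (n+1)) ∈ T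
      · have hTm := hT _ hmem
        rw [hbot] at hTm
        rw [hcz, if_pos hmem] at h1
        show (0:ℝ) < y j
        rw [hjr]
        push_cast at h1
        simp only [hr0] at h1 hTm
        linarith
      · rw [hcz, if_neg hmem] at h1
        have hb := (hbox (σ r0)).1
        show (0:ℝ) < y j
        rw [hjr]
        push_cast at h1
        linarith
    · set rl : Fin n := ⟨n - 1, by omega⟩ with hrl
      have h1 : y (σ r) ≤ y (σ rl) := hsm'.monotone (Fin.le_def.mpr (by simp [hrl]; omega))
      have htop := slack_top' (s := s) horder ⟨n, lt_add_one n⟩ rfl hn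
      have hcl := cnt_last T (r := rl) (by simp [hrl]; omega)
      rw [hyσ rl] at h1
      by_cases hmem : (⟨n, lt_add_one n⟩ : Fin (n+1)) ∈ T
      · have hTn := hT _ hmem
        rw [htop] at hTn
        rw [if_pos hmem] at hcl
        have hcc : (cnt T rl : ℝ) = (k : ℝ) - 1 := by
          have h2 : cnt T rl + 1 = k := hcl
          have := congrArg (fun m : ℕ => (m : ℝ)) h2
          push_cast at this
          linarith
        rw [hcc] at h1
        show y j < s - (k:ℝ) * d
        rw [hjr]
        push_cast
        linarith
      · rw [if_neg hmem] at hcl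
        have hcc : (cnt T rl : ℝ) = (k : ℝ) := by exact_mod_cast congrArg (fun m : ℕ => (m : ℝ)) (by omega : cnt T rl = k)
        rw [hcc] at h1
        have hb := (hbox (σ rl)).2
        show y j < s - (k:ℝ) * d
        rw [hjr]
        push_cast
        linarith
  · rintro ⟨hbox', hsm'⟩
    have hxσ : ∀ r : Fin n, x (σ r) = y (σ r) + d * cnt T r := by
      intro r; rw [hyσ r]; ring
    have hsmx : StrictMono (x ∘ σ) := by
      apply strictMono_of_adjacent
      intro r r' hrr
      have h0 : y (σ r) < y (σ r') := hsm' (Fin.lt_def.mpr (by omega))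
      have hcm : (cnt T r : ℝ) ≤ cnt T r' := by
        exact_mod_cast cnt_mono T (Fin.le_def.mpr (by omega))
      show x (σ r) < x (σ r')
      rw [hxσ r, hxσ r']
      nlinarith
    have horder : Monotone (x ∘ σ) := hsmx.monotone
    have hkbound : ∀ rl : Fin n, (rl : ℕ) + 1 = n → (cnt T rl : ℝ) ≤ (k : ℝ) ∧
        ((⟨n, lt_add_one n⟩ : Fin (n+1)) ∈ T → (cnt T rl : ℝ) = (k : ℝ) - 1) := by
      intro rl hrl
      have hcl := cnt_last T hrl
      constructor
      · have : cnt T rl ≤ k := by omega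
        exact_mod_cast this
      · intro hmem
        rw [if_pos hmem] at hcl
        have := congrArg (fun m : ℕ => (m : ℝ)) hcl
        push_cast at this
        linarith
    refine ⟨?_, hsmx, ?_⟩
    · intro j
      have hn : 0 < n := by have := (σ.symm j).isLt; omega
      have hjr : x j = x (σ (σ.symm j)) := by rw [Equiv.apply_symm_apply]
      set r := σ.symm j with hr
      set r0 : Fin n := ⟨0, hn⟩ with hr0
      set rl : Fin n := ⟨n - 1, by omega⟩ with hrl
      constructor
      · have h1 : x (σ r0) ≤ x (σ r) := hsmx.monotone (Fin.le_def.mpr (by simp [hr0]))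
        have h2 : 0 < y (σ r0) := (hbox' (σ r0)).1
        have h3 : (0 : ℝ) ≤ cnt T r0 := by positivity
        rw [hjr]
        rw [hxσ r0] at h1
        nlinarith
      · have h1 : x (σ r) ≤ x (σ rl) := hsmx.monotone (Fin.le_def.mpr (by simp [hrl]; omega))
        have h2 : y (σ rl) < s - k * d := (hbox' (σ rl)).2
        have h3 : (cnt T rl : ℝ) ≤ (k : ℝ) := (hkbound rl (by simp [hrl]; omega)).1
        rw [hjr]
        rw [hxσ rl] at h1
        nlinarith
    · intro t ht
      by_cases h2 : (t : ℕ) < n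
      · by_cases h1 : 0 < (t : ℕ)
        · set r : Fin n := ⟨(t : ℕ) - 1, by omega⟩ with hr
          set r' : Fin n := ⟨(t : ℕ), h2⟩ with hr'
          have hrr : (r' : ℕ) = (r : ℕ) + 1 := by simp [hr, hr']; omega
          have hsl := slack_mid' (s := s) horder t h1 h2
          rw [show (⟨(t : ℕ), h2⟩ : Fin n) = r' from rfl,
            show (⟨(t : ℕ) - 1, by omega⟩ : Fin n) = r from rfl] at hsl
          have hcs := cnt_succ T hrr
          have hmem : (⟨(r : ℕ) + 1, by have := r'.isLt; omega⟩ : Fin (n+1)) ∈ T := by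
            rw [show (⟨(r : ℕ) + 1, by have := r'.isLt; omega⟩ : Fin (n+1)) = t from
              Fin.ext (by simp [hr]; omega)]
            exact ht
          rw [if_pos hmem] at hcs
          have hydiff : y (σ r) < y (σ r') := hsm' (Fin.lt_def.mpr (by omega))
          rw [hsl, hxσ r, hxσ r', hcs]
          push_cast
          linarith
        · -- t = 0, 0 < n
          have hn : 0 < n := h2.trans_le' (Nat.zero_le _) |>.trans_le (le_refl n)
          have hsl := slack_bot' (s := s) horder t (by omega) (by omega)
          set r0 : Fin n := ⟨0, by omega⟩ with hr0
          have hmem : (⟨0, Nat.succ_pos n⟩ : Fin (n+1)) ∈ T := by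
            rw [show (⟨0, Nat.succ_pos n⟩ : Fin (n+1)) = t from Fin.ext (by simp; omega)]
            exact ht
          have hcz := cnt_zero T (r := r0) rfl
          rw [if_pos hmem] at hcz
          have hb : (0:ℝ) < y (σ r0) := (hbox' (σ r0)).1
          rw [hsl, hxσ r0, hcz]
          push_cast
          linarith
      · by_cases h1 : 0 < (t : ℕ)
        · -- t = n, 0 < n
          have htn : (t : ℕ) = n := by have := t.isLt; omega
          have hn : 0 < n := by omega
          have hsl := slack_top' (s := s) horder t htn hn
          set rl : Fin n := ⟨n - 1, by omega⟩ with hrl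
          have hmem : (⟨n, lt_add_one n⟩ : Fin (n+1)) ∈ T := by
            rw [show (⟨n, lt_add_one n⟩ : Fin (n+1)) = t from Fin.ext (by simp [htn])]
            exact ht
          have hcc := (hkbound rl (by simp [hrl]; omega)).2 hmem
          have hb : y (σ rl) < s - (k:ℝ) * d := (hbox' (σ rl)).2
          rw [hsl, hxσ rl, hcc]
          linarith
        · -- n = 0
          have hn : n = 0 := by omega
          rw [slack_deg t hn]
          exact hds

def obox (n : ℕ) (a : ℝ) : Set (Fin n → ℝ) := Set.pi Set.univ fun _ => Set.Ioo 0 a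

theorem measurableSet_box (n : ℕ) (s : ℝ) : MeasurableSet (box n s) :=
  MeasurableSet.univ_pi fun _ => measurableSet_Icc

theorem measurableSet_obox (n : ℕ) (a : ℝ) : MeasurableSet (obox n a) :=
  MeasurableSet.univ_pi fun _ => measurableSet_Ioo

theorem volume_obox (n : ℕ) (a : ℝ) : volume (obox n a) = ENNReal.ofReal (max a 0 ^ n) := by
  rw [show obox n a = Set.pi Set.univ fun _ => Set.Ioo (0:ℝ) a from rfl, volume_pi_pi]
  have h1 : volume (Set.Ioo (0:ℝ) a) = ENNReal.ofReal (max a 0) := by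
    rw [Real.volume_Ioo, sub_zero]
    rcases le_total a 0 with h | h
    · rw [ENNReal.ofReal_of_nonpos h, max_eq_right h, ENNReal.ofReal_zero]
    · rw [max_eq_left h]
  simp only [h1, Finset.prod_const, Finset.card_univ, Fintype.card_fin]
  rw [← ENNReal.ofReal_pow (le_max_right a 0)]

theorem vol_eq_sum_chambers {n : ℕ} (W : Set (Fin n → ℝ)) (hW : MeasurableSet W) :
    volume W = ∑ σ : Equiv.Perm (Fin n), volume (W ∩ cham σ) := by
  have hmeas : ∀ σ : Equiv.Perm (Fin n), MeasurableSet (W ∩ cham σ) :=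
    fun σ => hW.inter (measurableSet_cham σ)
  have hdisj : Pairwise (Function.onFun Disjoint fun σ : Equiv.Perm (Fin n) => W ∩ cham σ) := by
    intro σ τ hστ
    exact Set.disjoint_of_subset Set.inter_subset_right Set.inter_subset_right
      (cham_disjoint hστ)
  have hU : volume (⋃ σ : Equiv.Perm (Fin n), W ∩ cham σ)
      = ∑ σ : Equiv.Perm (Fin n), volume (W ∩ cham σ) := by
    rw [measure_iUnion hdisj hmeas, tsum_fintype]
  have hsub : W ⊆ (⋃ σ : Equiv.Perm (Fin n), W ∩ cham σ) ∪
      {x : Fin n → ℝ | ¬ Function.Injective x} := by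
    intro x hx
    by_cases h : Function.Injective x
    · exact Or.inl (Set.mem_iUnion.2 ⟨Tuple.sort x, hx, mem_cham_sort h⟩)
    · exact Or.inr h
  apply le_antisymm
  · calc volume W ≤ volume ((⋃ σ : Equiv.Perm (Fin n), W ∩ cham σ) ∪
        {x : Fin n → ℝ | ¬ Function.Injective x}) := measure_mono hsub
      _ ≤ volume (⋃ σ : Equiv.Perm (Fin n), W ∩ cham σ) +
          volume {x : Fin n → ℝ | ¬ Function.Injective x} := measure_union_le _ _
      _ = ∑ σ : Equiv.Perm (Fin n), volume (W ∩ cham σ) := by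
          rw [volume_noninj_zero n, add_zero, hU]
  · rw [← hU]
    exact measure_mono (Set.iUnion_subset fun σ => Set.inter_subset_left)

theorem vol_inter_obox {n : ℕ} {s : ℝ} (A : Set (Fin n → ℝ)) (hA : A ⊆ box n s) :
    volume A = volume (A ∩ obox n s) := by
  apply le_antisymm
  · have hsub : A ⊆ (A ∩ obox n s) ∪
        ⋃ j : Fin n, ({x : Fin n → ℝ | x j = 0} ∪ {x : Fin n → ℝ | x j = s}) := by
      intro x hx
      by_cases h : x ∈ obox n s
      · exact Or.inl ⟨hx, h⟩
      · right
        simp only [obox, Set.mem_pi, Set.mem_univ, forall_true_left, not_forall] at h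
        obtain ⟨j, hj⟩ := h
        have hj' : x j ∈ Set.Icc 0 s := hA hx j (Set.mem_univ j)
        refine Set.mem_iUnion.2 ⟨j, ?_⟩
        rcases hj'.1.eq_or_lt with h0 | h0
        · exact Or.inl h0.symm
        · rcases hj'.2.eq_or_lt with h1 | h1
          · exact Or.inr h1
          · have hj3 : 0 < x j → s ≤ x j := by simpa using hj
            exact absurd (hj3 h0) (not_le.mpr h1)
    calc volume A ≤ volume (A ∩ obox n s) +
        volume (⋃ j : Fin n, ({x : Fin n → ℝ | x j = 0} ∪ {x : Fin n → ℝ | x j = s})) :=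
          (measure_mono hsub).trans (measure_union_le _ _)
      _ = volume (A ∩ obox n s) := by
          rw [measure_iUnion_null fun j =>
            measure_union_null (volume_hyper n j 0) (volume_hyper n j s), add_zero]
  · exact measure_mono Set.inter_subset_left

theorem key_volume {n : ℕ} {s d : ℝ} (hd : 0 < d) (hds : d < s) (T : Finset (Fin (n+1))) :
    volume (box n s ∩ ⋂ t ∈ T, {x : Fin n → ℝ | d < slack n s x t}) =
      ENNReal.ofReal (max (s - T.card * d) 0 ^ n) := by
  set a : ℝ := s - T.card * d with ha
  set V := box n s ∩ ⋂ t ∈ T, {x : Fin n → ℝ | d < slack n s x t} with hV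
  have hVm : MeasurableSet V := (measurableSet_box n s).inter
    (MeasurableSet.biInter (Set.to_countable _) fun t _ =>
      measurableSet_lt measurable_const (measurable_slack s t))
  have hVsub : V ⊆ box n s := Set.inter_subset_left
  have step1 : volume V = volume (V ∩ obox n s) := vol_inter_obox V hVsub
  have hVOm : MeasurableSet (V ∩ obox n s) := hVm.inter (measurableSet_obox n s)
  have step2 : volume (V ∩ obox n s) =
      ∑ σ : Equiv.Perm (Fin n), volume ((V ∩ obox n s) ∩ cham σ) :=
    vol_eq_sum_chambers _ hVOm
  have step3 : ∀ σ : Equiv.Perm (Fin n),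
      (V ∩ obox n s) ∩ cham σ = (fun x => x - shiftVec d T σ) ⁻¹' (obox n a ∩ cham σ) := by
    intro σ
    have hmem_box : ∀ z : Fin n → ℝ, ∀ b : ℝ, z ∈ obox n b ↔ ∀ j, z j ∈ Set.Ioo 0 b := by
      intro z b
      constructor
      · intro h j; exact h j (Set.mem_univ j)
      · intro h j _; exact h j
    ext x
    have hh := heart hd hds T σ x
    constructor
    · rintro ⟨⟨hVx, hOx⟩, hC⟩
      have hslack : ∀ t ∈ T, d < slack n s x t := fun t ht =>
        Set.mem_iInter₂.mp hVx.2 t ht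
      have := hh.mp ⟨(hmem_box x s).mp hOx, hC, hslack⟩
      refine Set.mem_preimage.mpr ⟨(hmem_box _ a).mpr fun j => this.1 j, this.2⟩
    · intro hx
      have hx' := Set.mem_preimage.mp hx
      have := hh.mpr ⟨fun j => (hmem_box _ a).mp hx'.1 j, hx'.2⟩
      refine ⟨⟨⟨?_, Set.mem_iInter₂.mpr fun t ht => this.2.2 t ht⟩,
        (hmem_box x s).mpr this.1⟩, this.2.1⟩
      intro j _
      exact Set.Ioo_subset_Icc_self (this.1 j)
  have step4 : ∀ σ : Equiv.Perm (Fin n),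
      volume ((fun x : Fin n → ℝ => x - shiftVec d T σ) ⁻¹' (obox n a ∩ cham σ)) =
      volume (obox n a ∩ cham σ) := by
    intro σ
    have : (fun x : Fin n → ℝ => x - shiftVec d T σ) =
        (fun x : Fin n → ℝ => -shiftVec d T σ + x) := by
      funext x; rw [sub_eq_neg_add]
    rw [this]
    exact measure_preimage_add volume _ _
  have step5 : ∑ σ : Equiv.Perm (Fin n), volume (obox n a ∩ cham σ) = volume (obox n a) :=
    (vol_eq_sum_chambers _ (measurableSet_obox n a)).symm
  rw [step1, step2]
  calc ∑ σ : Equiv.Perm (Fin n), volume ((V ∩ obox n s) ∩ cham σ)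
      = ∑ σ : Equiv.Perm (Fin n), volume (obox n a ∩ cham σ) := by
        refine Finset.sum_congr rfl fun σ _ => ?_
        rw [step3 σ, step4 σ]
    _ = volume (obox n a) := step5
    _ = ENNReal.ofReal (max a 0 ^ n) := volume_obox n a

theorem sum_range_shift (f : ℕ → ℝ) (m : ℕ) :
    ∑ i ∈ Finset.range m, f (i+1) = ∑ k ∈ Finset.Icc 1 m, f k := by
  induction m with
  | zero => simp
  | succ m ih => rw [Finset.sum_range_succ, ih, Finset.sum_Icc_succ_top (by omega)]

theorem incl_excl (n : ℕ) (s d : ℝ) (hs : 0 < s) (hd : 0 < d) (hds : d < s) :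
    ((volume.restrict (box n s)) {ω : Fin n → ℝ | ∀ i : Fin (n+1), slack n s ω i ≤ d}).toReal
      = ∑ m ∈ Finset.range (n+2), ((n+1).choose m : ℝ) * ((-1)^m * max (s - m*d) 0 ^ n) := by
  set ν := volume.restrict (box n s) with hν
  set B : Fin (n+1) → Set (Fin n → ℝ) := fun i => {x | d < slack n s x i} with hB
  have hBm : ∀ i, MeasurableSet (B i) := fun i =>
    measurableSet_lt measurable_const (measurable_slack s i)
  set E := {ω : Fin n → ℝ | ∀ i : Fin (n+1), slack n s ω i ≤ d} with hE
  have hEm : MeasurableSet E := by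
    have : E = ⋂ i : Fin (n+1), (B i)ᶜ := by
      ext x
      simp only [hE, Set.mem_setOf_eq, Set.mem_iInter, Set.mem_compl_iff, hB, not_lt]
    rw [this]
    exact MeasurableSet.iInter fun i => (hBm i).compl
  have hSm : ∀ T : Finset (Fin (n+1)), MeasurableSet (⋂ t ∈ T, B t) :=
    fun T => MeasurableSet.biInter (Set.to_countable _) fun t _ => hBm t
  -- pointwise identity
  have hpt : ∀ x : Fin n → ℝ, Set.indicator E (fun _ => (1:ℝ)) x =
      ∑ T ∈ (Finset.univ : Finset (Fin (n+1))).powerset,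
        (-1 : ℝ)^T.card * Set.indicator (⋂ t ∈ T, B t) (fun _ => (1:ℝ)) x := by
    intro x
    have lhs_eq : Set.indicator E (fun _ => (1:ℝ)) x =
        ∏ i : Fin (n+1), ((-Set.indicator (B i) (fun _ => (1:ℝ)) x) + 1) := by
      by_cases hx : x ∈ E
      · rw [Set.indicator_of_mem hx]
        have : ∀ i : Fin (n+1), x ∉ B i := fun i => by
          simp only [hB, Set.mem_setOf_eq, not_lt]; exact hx i
        rw [Finset.prod_congr rfl fun i _ => by rw [Set.indicator_of_notMem (this i)]]
        simp
      · rw [Set.indicator_of_notMem hx]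
        simp only [hE, Set.mem_setOf_eq, not_forall] at hx
        obtain ⟨i, hi⟩ := hx
        have hxB : x ∈ B i := by simp only [hB, Set.mem_setOf_eq]; exact lt_of_not_ge hi
        rw [eq_comm]
        apply Finset.prod_eq_zero (Finset.mem_univ i)
        rw [Set.indicator_of_mem hxB]
        simp
    rw [lhs_eq, Finset.prod_add]
    apply Finset.sum_congr rfl
    intro T _
    rw [Finset.prod_const_one, mul_one]
    have h1 : ∏ t ∈ T, (-Set.indicator (B t) (fun _ => (1:ℝ)) x) =
        (-1:ℝ)^T.card * ∏ t ∈ T, Set.indicator (B t) (fun _ => (1:ℝ)) x := by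
      rw [show (fun t => -Set.indicator (B t) (fun _ => (1:ℝ)) x) =
        (fun t => (-1:ℝ) * Set.indicator (B t) (fun _ => (1:ℝ)) x) from funext fun t => by ring]
      rw [Finset.prod_mul_distrib, Finset.prod_const]
    rw [h1]
    congr 1
    by_cases h : ∀ t ∈ T, x ∈ B t
    · rw [Set.indicator_of_mem (Set.mem_iInter₂.mpr h)]
      rw [Finset.prod_congr rfl fun t ht => Set.indicator_of_mem (h t ht) _]
      simp
    · push_neg at h
      obtain ⟨t, ht, hnt⟩ := h
      rw [Set.indicator_of_notMem (fun hc => hnt (Set.mem_iInter₂.mp hc t ht))]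
      apply Finset.prod_eq_zero ht
      rw [Set.indicator_of_notMem hnt]
  -- integrate both sides
  have hint : ∀ T : Finset (Fin (n+1)),
      Integrable (fun x => (-1:ℝ)^T.card *
        Set.indicator (⋂ t ∈ T, B t) (fun _ => (1:ℝ)) x) ν := by
    intro T
    apply Integrable.const_mul
    rw [integrable_indicator_iff (hSm T)]
    exact integrableOn_const (measure_ne_top ν _)
  have key : (ν E).toReal = ∑ T ∈ (Finset.univ : Finset (Fin (n+1))).powerset,
      (-1:ℝ)^T.card * (ν (⋂ t ∈ T, B t)).toReal := by
    rw [← measureReal_def, ← integral_indicator_one hEm]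
    rw [show (fun x => Set.indicator E (1 : (Fin n → ℝ) → ℝ) x) =
      (fun x => ∑ T ∈ (Finset.univ : Finset (Fin (n+1))).powerset,
        (-1 : ℝ)^T.card * Set.indicator (⋂ t ∈ T, B t) (fun _ => (1:ℝ)) x) from
      funext fun x => hpt x]
    rw [integral_finset_sum _ fun T _ => hint T]
    apply Finset.sum_congr rfl
    intro T _
    rw [integral_const_mul]
    congr 1
    exact integral_indicator_one (hSm T)
  -- compute each term
  have hterm : ∀ T : Finset (Fin (n+1)),
      (ν (⋂ t ∈ T, B t)).toReal = max (s - T.card * d) 0 ^ n := by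
    intro T
    rw [hν, Measure.restrict_apply (hSm T), Set.inter_comm]
    have : box n s ∩ ⋂ t ∈ T, B t = box n s ∩ ⋂ t ∈ T, {x : Fin n → ℝ | d < slack n s x t} := rfl
    rw [this, key_volume hd hds T, ENNReal.toReal_ofReal (by positivity)]
  rw [key]
  rw [Finset.sum_congr rfl fun T _ => by rw [hterm T]]
  rw [Finset.sum_powerset_apply_card (fun m => (-1:ℝ)^m * max (s - m*d) 0 ^ n)
    (x := (Finset.univ : Finset (Fin (n+1))))]
  simp only [Finset.card_univ, Fintype.card_fin, nsmul_eq_mul]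

theorem final_sum (n : ℕ) (s d : ℝ) (hs : 0 < s) (hd : 0 < d) (hds : d < s) :
    s⁻¹ ^ n * (∑ m ∈ Finset.range (n+2), ((n+1).choose m : ℝ) * ((-1)^m * max (s - m*d) 0 ^ n))
      = 1 - ∑ k ∈ Finset.Icc 1 (⌊s / d⌋₊),
        (-1 : ℝ) ^ (k - 1) * ((n + 1).choose k) * (1 - k * (d / s)) ^ n := by
  set F := ⌊s / d⌋₊ with hF
  have hsd : (0:ℝ) ≤ s / d := by positivity
  have hF1 : 1 ≤ F := Nat.le_floor (by rw [Nat.cast_one, le_div_iff₀ hd]; linarith)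
  have hmax : ∀ m : ℕ, s⁻¹ ^ n * (((n+1).choose m : ℝ) * ((-1)^m * max (s - m*d) 0 ^ n))
      = ((n+1).choose m : ℝ) * ((-1)^m * max (1 - m*(d/s)) 0 ^ n) := by
    intro m
    have h1 : s⁻¹ * max (s - m*d) 0 = max (1 - m*(d/s)) 0 := by
      have hid : 1 - (m:ℝ)*(d/s) = (s - m*d) * s⁻¹ := by field_simp
      rcases le_total (s - (m:ℝ)*d) 0 with h | h
      · rw [max_eq_right h, mul_zero, max_eq_right (by
          rw [hid]; exact mul_nonpos_of_nonpos_of_nonneg h (inv_nonneg.mpr hs.le))]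
      · rw [max_eq_left h, max_eq_left (by
          rw [hid]; exact mul_nonneg h (inv_nonneg.mpr hs.le)), hid]
        ring
    calc s⁻¹ ^ n * (((n+1).choose m : ℝ) * ((-1)^m * max (s - m*d) 0 ^ n))
        = ((n+1).choose m : ℝ) * ((-1)^m * (s⁻¹ * max (s - m*d) 0) ^ n) := by
          rw [mul_pow]; ring
      _ = _ := by rw [h1]
  rw [Finset.mul_sum]
  rw [Finset.sum_congr rfl fun m _ => hmax m]
  rw [Finset.sum_range_succ']
  set A : ℕ → ℝ := fun i => ((n+1).choose (i+1) : ℝ) *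
    ((-1)^(i+1) * max (1 - (((i+1):ℕ):ℝ)*(d/s)) 0 ^ n) with hA
  have hzero : ((n+1).choose 0 : ℝ) * ((-1)^0 * max (1 - ((0:ℕ):ℝ)*(d/s)) 0 ^ n) = 1 := by
    norm_num
  rw [hzero]
  have h2 : ∑ i ∈ Finset.range (n+1), A i = ∑ i ∈ Finset.range F, A i := by
    have hAzero_big : ∀ i : ℕ, n+1 < i+1 → A i = 0 := by
      intro i hi
      rw [hA]
      simp only
      rw [Nat.choose_eq_zero_of_lt hi]
      norm_num
    have hAzero_floor : ∀ i : ℕ, F ≤ i → i + 1 ≤ n + 1 → A i = 0 := by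
      intro i hi hi2
      have hlt : s / d < ((i+1 : ℕ) : ℝ) := by
        rw [← Nat.floor_lt hsd]
        omega
      have hn1 : 1 ≤ n := by omega
      have hneg : 1 - (((i+1):ℕ):ℝ)*(d/s) < 0 := by
        rw [div_lt_iff₀ hd] at hlt
        have : 1 < (((i+1):ℕ):ℝ)*(d/s) := by
          rw [show (((i+1):ℕ):ℝ)*(d/s) = (((i+1):ℕ):ℝ)*d/s by ring, lt_div_iff₀ hs, one_mul]
          exact hlt
        linarith
      rw [hA]
      simp only
      rw [max_eq_right hneg.le, zero_pow (by omega), mul_zero, mul_zero]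
    rcases le_total (n+1) F with h | h
    · apply Finset.sum_subset (Finset.range_subset_range.mpr h)
      intro i hi hni
      simp only [Finset.mem_range, not_lt] at hi hni
      exact hAzero_big i (by omega)
    · rw [eq_comm]
      apply Finset.sum_subset (Finset.range_subset_range.mpr h)
      intro i hi hni
      simp only [Finset.mem_range, not_lt] at hi hni
      by_cases hc : i + 1 ≤ n + 1
      · exact hAzero_floor i hni hc
      · exact hAzero_big i (by omega)
  rw [h2]
  rw [← sum_range_shift (fun k => (-1 : ℝ) ^ (k - 1) * ((n + 1).choose k) * (1 - k * (d / s)) ^ n) F]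
  have h3 : ∀ i ∈ Finset.range F, A i =
      -((-1 : ℝ) ^ ((i+1) - 1) * ((n + 1).choose (i+1)) * (1 - ((i+1:ℕ):ℝ) * (d / s)) ^ n) := by
    intro i hi
    simp only [Finset.mem_range] at hi
    have hle : ((i+1 : ℕ) : ℝ) ≤ s / d := by
      rw [← Nat.le_floor_iff hsd]
      omega
    have hnn : 0 ≤ 1 - (((i+1):ℕ):ℝ)*(d/s) := by
      rw [le_div_iff₀ hd] at hle
      have : (((i+1):ℕ):ℝ)*(d/s) ≤ 1 := by
        rw [show (((i+1):ℕ):ℝ)*(d/s) = (((i+1):ℕ):ℝ)*d/s by ring, div_le_one hs]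
        exact hle
      linarith
    rw [hA]
    simp only
    rw [max_eq_left hnn]
    have : (i + 1) - 1 = i := by omega
    rw [this, pow_succ]
    ring
  rw [Finset.sum_congr rfl h3, Finset.sum_neg_distrib]
  ring

/-- Probability of monitoring: all n+1 spacings are at most d. -/
theorem prob_monitoring (n : ℕ) (s d : ℝ) (hs : 0 < s) (hd : 0 < d) (hds : d < s) :
    iidUnif n s {ω | ∀ i : Fin (n + 1), slack n s ω i ≤ d} =
      ENNReal.ofReal (1 - ∑ k ∈ Finset.Icc 1 (⌊s / d⌋₊),
        (-1 : ℝ) ^ (k - 1) * (n + 1).choose k * (1 - k * (d / s)) ^ n) := by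
  rw [iidUnif_eq n s, Measure.smul_apply, smul_eq_mul]
  set E := {ω : Fin n → ℝ | ∀ i : Fin (n + 1), slack n s ω i ≤ d} with hE
  set ν := volume.restrict (box n s) with hν
  have hfin : ν E ≠ ⊤ := measure_ne_top ν _
  rw [← ENNReal.ofReal_toReal hfin]
  rw [← ENNReal.ofReal_pow (inv_nonneg.mpr hs.le)]
  rw [← ENNReal.ofReal_mul (by positivity)]
  congr 1
  rw [show (ν E).toReal = ∑ m ∈ Finset.range (n+2),
      ((n+1).choose m : ℝ) * ((-1)^m * max (s - m*d) 0 ^ n) from incl_excl n s d hs hd hds]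
  exact final_sum n s d hs hd hds
end

section
/- Let $b > 0$, let $a_1,\dots,a_n > 0$, let $T' = \{\mathbf{s} \in \mathbb{R}_+^n : \sum_{i=1}^n s_i \le b\}$ and $H = \prod_{i=1}^n [0, a_i]$. Then the Lebesgue volume of $T' \cap H$ equals $\frac{1}{n!} \sum_{\mathbf{v} \in \{0,1\}^n} (-1)^{\mathbf{1}^T\mathbf{v}} \left(\max(b - \mathbf{a}^T\mathbf{v}, 0)\right)^n$, where $\mathbf{a} = (a_1,\dots,a_n)$. -/
open MeasureTheory Finset Nat

lemma simplex_measurable (n : ℕ) (c : ℝ) :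
    MeasurableSet {x : Fin n → ℝ | (∀ i, 0 ≤ x i) ∧ ∑ i, x i ≤ c} := by
  have h1 : MeasurableSet {x : Fin n → ℝ | ∀ i, 0 ≤ x i} := by
    rw [Set.setOf_forall]
    exact MeasurableSet.iInter fun i =>
      measurableSet_le measurable_const (measurable_pi_apply i)
  have h2 : MeasurableSet {x : Fin n → ℝ | ∑ i, x i ≤ c} :=
    measurableSet_le (Finset.measurable_sum _ fun i _ => measurable_pi_apply i)
      measurable_const
  exact (Set.setOf_and .. ▸ h1.inter h2 : _)

lemma simplex_empty (n : ℕ) {c : ℝ} (hc : c < 0) :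
    {x : Fin n → ℝ | (∀ i, 0 ≤ x i) ∧ ∑ i, x i ≤ c} = ∅ := by
  ext x
  simp only [Set.mem_setOf_eq, Set.mem_empty_iff_false, iff_false, not_and]
  intro hx hs
  have : (0:ℝ) ≤ ∑ i, x i := Finset.sum_nonneg fun i _ => hx i
  linarith

lemma simplex_volume (n : ℕ) (c : ℝ) (hc : 0 ≤ c) :
    volume {x : Fin n → ℝ | (∀ i, 0 ≤ x i) ∧ ∑ i, x i ≤ c} =
      ENNReal.ofReal (c ^ n / n !) := by
  induction n generalizing c with
  | zero =>
    have : {x : Fin 0 → ℝ | (∀ i, 0 ≤ x i) ∧ ∑ i, x i ≤ c} = Set.univ := by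
      ext x; simp [Finset.sum_empty, hc, Fin.forall_fin_zero_pi]
    rw [this]
    simp [volume_pi, Measure.pi_univ]
  | succ n ih =>
    have hvol : (volume : Measure (Fin (n+1) → ℝ)) = Measure.pi fun _ => volume :=
      rfl
    set g := (MeasurableEquiv.piFinSuccAbove (fun _ : Fin (n+1) => ℝ) 0).symm with hg
    have hmp : MeasurePreserving g
        ((volume : Measure ℝ).prod (Measure.pi fun _ : Fin n => (volume : Measure ℝ)))
        (Measure.pi fun _ : Fin (n+1) => (volume : Measure ℝ)) :=
      (measurePreserving_piFinSuccAbove (fun _ : Fin (n+1) => (volume : Measure ℝ)) 0).symm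
    have hSm := simplex_measurable (n+1) c
    have key := hmp.measure_preimage hSm.nullMeasurableSet
    have hpre : g ⁻¹' {x : Fin (n+1) → ℝ | (∀ i, 0 ≤ x i) ∧ ∑ i, x i ≤ c} =
        {p : ℝ × (Fin n → ℝ) | (0 ≤ p.1 ∧ ∀ j, 0 ≤ p.2 j) ∧ p.1 + ∑ j, p.2 j ≤ c} := by
      ext ⟨t, y⟩
      have happ : g (t, y) = Fin.cons t y := by
        simp only [hg, MeasurableEquiv.piFinSuccAbove, Fin.insertNth_zero,
          MeasurableEquiv.symm_mk, MeasurableEquiv.coe_mk, Equiv.symm_symm,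
          Fin.insertNthEquiv_zero]
        rfl
      simp only [Set.mem_preimage, Set.mem_setOf_eq, happ, Fin.sum_cons,
        Fin.forall_fin_succ, Fin.cons_zero, Fin.cons_succ]
    rw [hvol, ← key, hpre]
    have hpm : MeasurableSet
        {p : ℝ × (Fin n → ℝ) | (0 ≤ p.1 ∧ ∀ j, 0 ≤ p.2 j) ∧ p.1 + ∑ j, p.2 j ≤ c} := by
      rw [← hpre]
      exact hSm.preimage g.measurable
    rw [Measure.prod_apply hpm]
    have hsec : ∀ t : ℝ, {y : Fin n → ℝ | (0 ≤ t ∧ ∀ j, 0 ≤ y j) ∧ t + ∑ j, y j ≤ c} =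
        (if t ∈ Set.Icc 0 c then {y : Fin n → ℝ | (∀ j, 0 ≤ y j) ∧ ∑ j, y j ≤ c - t}
          else ∅) := by
      intro t
      by_cases ht : t ∈ Set.Icc 0 c
      · rw [if_pos ht]
        obtain ⟨ht0, htc⟩ := ht
        ext y
        simp only [Set.mem_setOf_eq]
        constructor
        · rintro ⟨⟨-, hy⟩, hs⟩; exact ⟨hy, by linarith⟩
        · rintro ⟨hy, hs⟩; exact ⟨⟨ht0, hy⟩, by linarith⟩
      · rw [if_neg ht]
        simp only [Set.mem_Icc, not_and_or, not_le] at ht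
        rcases ht with ht | ht
        · ext y; simp only [Set.mem_setOf_eq, Set.mem_empty_iff_false, iff_false, not_and]
          rintro ⟨h0, -⟩; linarith
        · ext y
          simp only [Set.mem_setOf_eq, Set.mem_empty_iff_false, iff_false, not_and]
          rintro ⟨-, hy⟩ hs
          have : (0:ℝ) ≤ ∑ j, y j := Finset.sum_nonneg fun j _ => hy j
          linarith
    calc ∫⁻ t, (Measure.pi fun _ : Fin n => (volume : Measure ℝ))
            {y | (0 ≤ t ∧ ∀ j, 0 ≤ y j) ∧ t + ∑ j, y j ≤ c}
        = ∫⁻ t, Set.indicator (Set.Icc 0 c)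
            (fun t => ENNReal.ofReal ((c - t) ^ n / n !)) t := by
          congr 1
          ext t
          rw [hsec t]
          by_cases ht : t ∈ Set.Icc 0 c
          · rw [if_pos ht, Set.indicator_of_mem ht, ← volume_pi, ih _ (by linarith [ht.2])]
          · rw [if_neg ht, Set.indicator_of_notMem ht, measure_empty]
      _ = ∫⁻ t in Set.Icc 0 c, ENNReal.ofReal ((c - t) ^ n / n !) := by
          rw [lintegral_indicator measurableSet_Icc]
      _ = ENNReal.ofReal (∫ t in Set.Icc 0 c, (c - t) ^ n / n !) := by
          rw [← ofReal_integral_eq_lintegral_ofReal]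
          · exact (((continuous_const.sub continuous_id).pow n).div_const _).integrableOn_Icc
          · filter_upwards [ae_restrict_mem measurableSet_Icc] with t ht
            have : 0 ≤ c - t := sub_nonneg.mpr ht.2
            positivity
      _ = ENNReal.ofReal (c ^ (n+1) / (n+1)!) := by
          congr 1
          rw [MeasureTheory.integral_Icc_eq_integral_Ioc,
            ← intervalIntegral.integral_of_le hc, intervalIntegral.integral_div,
            intervalIntegral.integral_comp_sub_left (fun x => x ^ n) c]
          simp only [sub_self, sub_zero, integral_pow]
          rw [Nat.factorial_succ]
          push_cast
          rw [zero_pow (by omega), sub_zero, div_div]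

lemma coord_null (n : ℕ) (i : Fin n) : volume {y : Fin n → ℝ | y i = 0} = 0 := by
  have hset : {y : Fin n → ℝ | y i = 0} =
      Set.pi Set.univ (fun j => if j = i then ({0} : Set ℝ) else Set.univ) := by
    ext y
    simp only [Set.mem_setOf_eq, Set.mem_univ_pi]
    constructor
    · intro h j
      by_cases hj : j = i <;> simp [hj, h]
    · intro h
      have := h i
      simpa using this
  rw [hset, volume_pi_pi]
  exact Finset.prod_eq_zero (Finset.mem_univ i) (by simp)

lemma term_volume (n : ℕ) (b : ℝ) (hb : 0 < b) (a : Fin n → ℝ) (ha : ∀ i, 0 < a i)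
    (v : Fin n → Bool) :
    volume {x : Fin n → ℝ | ((∀ i, 0 ≤ x i) ∧ ∑ i, x i ≤ b) ∧
        ∀ i, v i = true → a i < x i} =
      ENNReal.ofReal (max (b - ∑ i, (if v i then a i else 0)) 0 ^ n / n !) := by
  set cf : Fin n → ℝ := fun i => if v i then a i else 0 with hcf
  have hcf0 : ∀ i, 0 ≤ cf i := fun i => by
    by_cases h : v i <;> simp [hcf, h, (ha i).le]
  set c' : ℝ := b - ∑ i, cf i with hc'
  rcases lt_or_ge c' 0 with hneg | hpos
  · -- empty set
    have hempty : {x : Fin n → ℝ | ((∀ i, 0 ≤ x i) ∧ ∑ i, x i ≤ b) ∧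
        ∀ i, v i = true → a i < x i} = ∅ := by
      ext x
      simp only [Set.mem_setOf_eq, Set.mem_empty_iff_false, iff_false, not_and]
      rintro ⟨hx0, hxb⟩ hxv
      have hsum : ∑ i, cf i ≤ ∑ i, x i := by
        apply Finset.sum_le_sum
        intro i _
        by_cases h : v i
        · simp only [hcf, if_pos h]; exact (hxv i h).le
        · simp only [hcf, if_neg h]; exact hx0 i
      linarith
    have hn : n ≠ 0 := by
      rintro rfl
      simp only [hc', Finset.univ_eq_empty, Finset.sum_empty, sub_zero] at hneg
      linarith
    rw [hempty, measure_empty, max_eq_right hneg.le, zero_pow hn, zero_div,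
      ENNReal.ofReal_zero]
  · -- translation
    have htrans : volume ((fun y => cf + y) ⁻¹'
        {x : Fin n → ℝ | ((∀ i, 0 ≤ x i) ∧ ∑ i, x i ≤ b) ∧
          ∀ i, v i = true → a i < x i}) =
        volume {x : Fin n → ℝ | ((∀ i, 0 ≤ x i) ∧ ∑ i, x i ≤ b) ∧
          ∀ i, v i = true → a i < x i} :=
      measure_preimage_add volume cf _
    set T := (fun y => cf + y) ⁻¹'
        {x : Fin n → ℝ | ((∀ i, 0 ≤ x i) ∧ ∑ i, x i ≤ b) ∧
          ∀ i, v i = true → a i < x i} with hT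
    set C := {y : Fin n → ℝ | (∀ i, 0 ≤ y i) ∧ ∑ i, y i ≤ c'} with hC
    set O := {y : Fin n → ℝ | (∀ i, 0 < y i) ∧ ∑ i, y i ≤ c'} with hO
    have hsumsplit : ∀ y : Fin n → ℝ, ∑ i, (cf + y) i = ∑ i, cf i + ∑ i, y i := by
      intro y
      rw [← Finset.sum_add_distrib]
      rfl
    have hOT : O ⊆ T := by
      intro y hy
      obtain ⟨hy0, hyc⟩ := hy
      refine ⟨⟨fun i => by
        simp only [Pi.add_apply]
        exact add_nonneg (hcf0 i) (hy0 i).le, ?_⟩, fun i hi => ?_⟩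
      · rw [hsumsplit]; linarith
      · have : cf i = a i := by simp [hcf, hi]
        simp only [Pi.add_apply, this]
        linarith [hy0 i]
    have hTC : T ⊆ C := by
      intro y hy
      obtain ⟨⟨hy0, hyb⟩, hyv⟩ := hy
      refine ⟨fun i => ?_, ?_⟩
      · by_cases h : v i
        · have := hyv i h
          simp only [Pi.add_apply, hcf, if_pos h] at this
          linarith [ha i]
        · have := hy0 i
          simp only [Pi.add_apply, hcf, if_neg h, zero_add] at this
          exact this
      · rw [hsumsplit] at hyb
        linarith
    have hCO : volume C = volume O := by
      have hdiff : C \ O ⊆ ⋃ i, {y : Fin n → ℝ | y i = 0} := by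
        rintro y ⟨⟨hy0, hyc⟩, hyO⟩
        simp only [hO, Set.mem_setOf_eq, not_and, not_le] at hyO
        by_cases hall : ∀ i, 0 < y i
        · exact absurd hyc (hyO hall).not_ge
        · push_neg at hall
          obtain ⟨i, hi⟩ := hall
          exact Set.mem_iUnion.mpr ⟨i, le_antisymm hi (hy0 i)⟩
      have hnull : volume (C \ O) = 0 :=
        measure_mono_null hdiff (by
          rw [measure_iUnion_null_iff]
          exact fun i => coord_null n i)
      refine le_antisymm ?_ (measure_mono (fun y hy => ⟨fun i => (hy.1 i).le, hy.2⟩))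
      calc volume C ≤ volume (O ∪ (C \ O)) := measure_mono (fun y hy => by
            by_cases h : y ∈ O
            · exact Or.inl h
            · exact Or.inr ⟨hy, h⟩)
        _ ≤ volume O + volume (C \ O) := measure_union_le _ _
        _ = volume O := by rw [hnull, add_zero]
    have hTvol : volume T = volume C := by
      refine le_antisymm (measure_mono hTC) ?_
      rw [hCO]
      exact measure_mono hOT
    rw [← htrans, hTvol, hC, simplex_volume n c' hpos, max_eq_left hpos]

lemma incl_excl_s8 {α : Type*} [MeasurableSpace α] (μ : Measure α) [IsFiniteMeasure μ]
    {n : ℕ} (B : Fin n → Set α) (hB : ∀ i, MeasurableSet (B i)) :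
    (μ {x | ∀ i, x ∉ B i}).toReal =
      ∑ S : Finset (Fin n), (-1 : ℝ) ^ S.card * (μ (⋂ i ∈ S, B i)).toReal := by
  classical
  have hBm : ∀ S : Finset (Fin n), MeasurableSet (⋂ i ∈ S, B i) := fun S =>
    S.measurableSet_biInter (fun i _ => hB i)
  have hKm : MeasurableSet {x : α | ∀ i, x ∉ B i} := by
    rw [Set.setOf_forall]
    exact MeasurableSet.iInter fun i => (hB i).compl
  have hpt : ∀ x : α,
      Set.indicator {x : α | ∀ i, x ∉ B i} (1 : α → ℝ) x =
      ∑ S : Finset (Fin n),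
        (-1 : ℝ) ^ S.card * Set.indicator (⋂ i ∈ S, B i) (1 : α → ℝ) x := by
    intro x
    have lhs_eq : Set.indicator {x : α | ∀ i, x ∉ B i} (1 : α → ℝ) x
        = ∏ i : Fin n, (((-1 : ℝ) * (if x ∈ B i then 1 else 0)) + 1) := by
      have hfac : ∀ i : Fin n,
          ((-1 : ℝ) * (if x ∈ B i then 1 else 0)) + 1 = if x ∉ B i then 1 else 0 := by
        intro i; by_cases h : x ∈ B i <;> simp [h]
      rw [Finset.prod_congr rfl (fun i _ => hfac i), Finset.prod_boole]
      rw [Set.indicator_apply]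
      simp only [Set.mem_setOf_eq, Finset.mem_univ, forall_true_left, Pi.one_apply,
        true_implies]
    rw [lhs_eq, Finset.prod_add, Finset.powerset_univ]
    apply Finset.sum_congr rfl
    intro S _
    rw [Finset.prod_const_one, mul_one, Finset.prod_mul_distrib, Finset.prod_const]
    congr 1
    rw [Finset.prod_boole, Set.indicator_apply]
    simp only [Set.mem_iInter, Pi.one_apply]
    congr 1
  calc (μ {x : α | ∀ i, x ∉ B i}).toReal
      = ∫ x, Set.indicator {x : α | ∀ i, x ∉ B i} (1 : α → ℝ) x ∂μ :=
        (integral_indicator_one hKm).symm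
    _ = ∫ x, ∑ S : Finset (Fin n),
          (-1 : ℝ) ^ S.card * Set.indicator (⋂ i ∈ S, B i) (1 : α → ℝ) x ∂μ :=
        integral_congr_ae (Filter.Eventually.of_forall hpt)
    _ = ∑ S : Finset (Fin n),
          ∫ x, (-1 : ℝ) ^ S.card * Set.indicator (⋂ i ∈ S, B i) (1 : α → ℝ) x ∂μ :=
        integral_finset_sum _ (fun S _ =>
          (((integrable_const (1 : ℝ)).indicator (hBm S)).const_mul _))
    _ = ∑ S : Finset (Fin n), (-1 : ℝ) ^ S.card * (μ (⋂ i ∈ S, B i)).toReal := by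
        refine Finset.sum_congr rfl fun S _ => ?_
        rw [integral_const_mul, integral_indicator_one (hBm S)]; rfl

/-- Volume of the intersection of the corner simplex {s ≥ 0, ∑ sᵢ ≤ b} with the
hypercuboid ∏ [0, aᵢ], via inclusion-exclusion over vertices. -/
theorem simplex_hypercuboid_volume (n : ℕ) (b : ℝ) (hb : 0 < b)
    (a : Fin n → ℝ) (ha : ∀ i, 0 < a i) :
    volume {x : Fin n → ℝ |
        ((∀ i, 0 ≤ x i) ∧ (∑ i, x i) ≤ b) ∧ ∀ i, x i ∈ Set.Icc 0 (a i)} =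
      ENNReal.ofReal ((n ! : ℝ)⁻¹ * ∑ v : Fin n → Bool,
        (-1 : ℝ) ^ (Finset.univ.filter fun i => v i = true).card *
          max (b - ∑ i, (if v i then a i else 0)) 0 ^ n) := by
  classical
  set A := {x : Fin n → ℝ | (∀ i, 0 ≤ x i) ∧ ∑ i, x i ≤ b} with hA
  have hAm : MeasurableSet A := simplex_measurable n b
  have hAvol : volume A = ENNReal.ofReal (b ^ n / n !) := simplex_volume n b hb.le
  set μ := volume.restrict A with hμ
  haveI : IsFiniteMeasure μ := by
    constructor
    rw [hμ, Measure.restrict_apply_univ, hAvol]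
    exact ENNReal.ofReal_lt_top
  set B : Fin n → Set (Fin n → ℝ) := fun i => {x | a i < x i} with hB
  have hBm : ∀ i, MeasurableSet (B i) := fun i =>
    measurableSet_lt measurable_const (measurable_pi_apply i)
  have hKm : MeasurableSet {x : Fin n → ℝ | ∀ i, x ∉ B i} := by
    rw [Set.setOf_forall]
    exact MeasurableSet.iInter fun i => (hBm i).compl
  have hset : {x : Fin n → ℝ | ((∀ i, 0 ≤ x i) ∧ ∑ i, x i ≤ b) ∧
      ∀ i, x i ∈ Set.Icc 0 (a i)} = {x | ∀ i, x ∉ B i} ∩ A := by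
    ext x
    simp only [Set.mem_setOf_eq, Set.mem_Icc, Set.mem_inter_iff, hB, hA, not_lt]
    constructor
    · rintro ⟨⟨h0, hs⟩, hi⟩; exact ⟨fun i => (hi i).2, h0, hs⟩
    · rintro ⟨h1, h0, hs⟩; exact ⟨⟨h0, hs⟩, fun i => ⟨h0 i, h1 i⟩⟩
  have hvolμ : volume {x : Fin n → ℝ | ((∀ i, 0 ≤ x i) ∧ ∑ i, x i ≤ b) ∧
      ∀ i, x i ∈ Set.Icc 0 (a i)} = μ {x | ∀ i, x ∉ B i} := by
    rw [hset, hμ, Measure.restrict_apply hKm]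
  have hterm : ∀ S : Finset (Fin n), μ (⋂ i ∈ S, B i) =
      ENNReal.ofReal (max (b - ∑ i, (if decide (i ∈ S) then a i else 0)) 0 ^ n / n !) := by
    intro S
    rw [hμ, Measure.restrict_apply (S.measurableSet_biInter fun i _ => hBm i)]
    have hint : (⋂ i ∈ S, B i) ∩ A =
        {x : Fin n → ℝ | ((∀ i, 0 ≤ x i) ∧ ∑ i, x i ≤ b) ∧
          ∀ i, decide (i ∈ S) = true → a i < x i} := by
      ext x
      simp only [Set.mem_inter_iff, Set.mem_iInter, Set.mem_setOf_eq, hB, hA,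
        decide_eq_true_eq]
      tauto
    rw [hint, term_volume n b hb a ha (fun i => decide (i ∈ S))]
  have hIE := incl_excl_s8 μ B hBm
  have htoReal : ∀ S : Finset (Fin n), (μ (⋂ i ∈ S, B i)).toReal =
      max (b - ∑ i, (if decide (i ∈ S) then a i else 0)) 0 ^ n / n ! := by
    intro S
    rw [hterm S, ENNReal.toReal_ofReal
      (div_nonneg (pow_nonneg (le_max_right _ 0) n) (Nat.cast_nonneg _))]
  rw [hvolμ, ← ENNReal.ofReal_toReal (measure_ne_top μ _)]
  congr 1
  rw [hIE]
  simp only [htoReal]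
  rw [Finset.mul_sum]
  refine Fintype.sum_bijective (fun S : Finset (Fin n) => fun i => decide (i ∈ S)) ?_ _ _ ?_
  · constructor
    · intro S T h
      ext i
      have := congrFun h i
      simpa using this
    · intro v
      exact ⟨Finset.univ.filter (fun i => v i = true), by ext i; simp⟩
  · intro S
    have hcard : (Finset.univ.filter fun i => decide (i ∈ S) = true).card = S.card := by
      congr 1
      ext i
      simp
    rw [hcard]
    ring
end

section
/- Let $b > 0$ and $a > 0$, and let $T = \{\mathbf{s} \in \mathbb{R}_+^n : \sum s_i \le b\}$, $H = [0,a]^n$. Then $\mathrm{Vol}(T \cap H) = \frac{1}{n!}\sum_{k=0}^{n} (-1)^k \binom{n}{k} \left(\max(b - ka, 0)\right)^n$. -/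
open MeasureTheory Finset Nat

/-! ### Auxiliary definitions and lemmas -/

lemma maxpow_cont (c : ℝ) (n : ℕ) : Continuous fun t : ℝ => max (c - t) 0 ^ n :=
  ((continuous_const.sub continuous_id).max continuous_const).pow n

/-- The candidate volume function. -/
noncomputable def fvol (a : ℝ) (n : ℕ) (b : ℝ) : ℝ :=
  (n ! : ℝ)⁻¹ * ∑ k ∈ Finset.range (n + 1),
    (-1 : ℝ) ^ k * n.choose k * max (b - k * a) 0 ^ n

lemma fvol_cont (a : ℝ) (n : ℕ) : Continuous (fvol a n) := by
  unfold fvol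
  refine continuous_const.mul (continuous_finset_sum _ fun k _ => ?_)
  exact continuous_const.mul
    (((continuous_id.sub continuous_const).max continuous_const).pow n)

lemma maxpow_integral {n : ℕ} (hn : n ≠ 0) {a : ℝ} (ha : 0 < a) (c : ℝ) :
    ∫ t in (0:ℝ)..a, max (c - t) 0 ^ n =
      (max c 0 ^ (n + 1) - max (c - a) 0 ^ (n + 1)) / (n + 1) := by
  have hpoly : ∀ d : ℝ, 0 ≤ d → ∫ t in (0:ℝ)..d, (d - t) ^ n = d ^ (n+1) / (n+1) := by
    intro d _
    rw [intervalIntegral.integral_comp_sub_left (fun u => u ^ n) d]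
    simp [integral_pow, zero_pow (by omega : n + 1 ≠ 0)]
  rcases le_or_gt c 0 with hc | hc
  · rw [intervalIntegral.integral_congr (g := fun _ => (0:ℝ))]
    · rw [max_eq_right hc, max_eq_right (by linarith)]
      simp [zero_pow hn, zero_pow (by omega : n + 1 ≠ 0)]
    · intro t ht
      rw [Set.uIcc_of_le ha.le] at ht
      simp only
      rw [max_eq_right (by linarith [ht.1]), zero_pow hn]
  rcases le_or_gt c a with hca | hca
  · have hint : ∀ u v : ℝ, IntervalIntegrable (fun t => max (c - t) 0 ^ n) volume u v :=
      fun u v => (maxpow_cont c n).intervalIntegrable u v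
    rw [← intervalIntegral.integral_add_adjacent_intervals (b := c) (hint 0 c) (hint c a)]
    have h1 : ∫ t in (0:ℝ)..c, max (c - t) 0 ^ n = c ^ (n+1) / (n+1) := by
      rw [intervalIntegral.integral_congr (g := fun t => (c - t) ^ n)]
      · exact hpoly c hc.le
      · intro t ht
        rw [Set.uIcc_of_le hc.le] at ht
        simp only
        rw [max_eq_left (by linarith [ht.2])]
    have h2 : ∫ t in c..a, max (c - t) 0 ^ n = 0 := by
      rw [intervalIntegral.integral_congr (g := fun _ => (0:ℝ))]
      · simp
      · intro t ht
        rw [Set.uIcc_of_le hca] at ht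
        simp only
        rw [max_eq_right (by linarith [ht.1]), zero_pow hn]
    rw [h1, h2, max_eq_left hc.le, max_eq_right (by linarith)]
    rw [zero_pow (by omega : n + 1 ≠ 0)]
    ring
  · rw [intervalIntegral.integral_congr (g := fun t => (c - t) ^ n)]
    · rw [intervalIntegral.integral_comp_sub_left (fun u => u ^ n) c]
      rw [integral_pow]
      rw [max_eq_left (by linarith), max_eq_left (by linarith)]
      simp
    · intro t ht
      rw [Set.uIcc_of_le ha.le] at ht
      simp only
      rw [max_eq_left (by linarith [ht.2])]

lemma sum_step (n : ℕ) (A : ℕ → ℝ) :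
    ∑ k ∈ range (n + 2), (-1 : ℝ) ^ k * (n + 1).choose k * A k
      = ∑ k ∈ range (n + 1), (-1 : ℝ) ^ k * n.choose k * A k
        - ∑ k ∈ range (n + 1), (-1 : ℝ) ^ k * n.choose k * A (k + 1) := by
  rw [Finset.sum_range_succ' (fun k => (-1 : ℝ) ^ k * (n + 1).choose k * A k) (n + 1)]
  have hsplit : ∀ k ∈ range (n + 1),
      (-1 : ℝ) ^ (k + 1) * ((n + 1).choose (k + 1)) * A (k + 1)
        = -((-1) ^ k * (n.choose k) * A (k + 1))
          + (-1) ^ (k + 1) * (n.choose (k + 1)) * A (k + 1) := by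
    intro k _
    rw [Nat.choose_succ_succ]
    push_cast
    ring
  rw [Finset.sum_congr rfl hsplit, Finset.sum_add_distrib, Finset.sum_neg_distrib]
  rw [Finset.sum_range_succ (fun k => (-1 : ℝ) ^ (k + 1) * n.choose (k + 1) * A (k + 1)) n]
  rw [Finset.sum_range_succ' (fun k => (-1 : ℝ) ^ k * n.choose k * A k) n]
  simp [Nat.choose_succ_self]
  ring

lemma fvol_rec {a : ℝ} (ha : 0 < a) {n : ℕ} (hn : n ≠ 0) (b : ℝ) :
    ∫ t in (0:ℝ)..a, fvol a n (b - t) = fvol a (n + 1) b := by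
  unfold fvol
  have key : ∫ t in (0:ℝ)..a, ∑ k ∈ range (n + 1),
        (-1 : ℝ) ^ k * n.choose k * max (b - t - k * a) 0 ^ n
      = ∑ k ∈ range (n + 1), (-1 : ℝ) ^ k * n.choose k *
          ((max (b - k * a) 0 ^ (n + 1) - max (b - (k + 1) * a) 0 ^ (n + 1)) / (n + 1)) := by
    rw [intervalIntegral.integral_finset_sum]
    · refine Finset.sum_congr rfl fun k _ => ?_
      rw [intervalIntegral.integral_const_mul]
      congr 1
      have : ∀ t : ℝ, b - t - k * a = (b - k * a) - t := fun t => by ring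
      simp_rw [this]
      rw [maxpow_integral hn ha (b - k * a)]
      congr 2
      ring
    · intro k _
      exact (continuous_const.mul
        (((continuous_const.sub continuous_id).sub continuous_const).max
          continuous_const |>.pow n)).intervalIntegrable 0 a
  rw [intervalIntegral.integral_const_mul]
  rw [key]
  have expand : ∑ k ∈ range (n + 1), (-1 : ℝ) ^ k * n.choose k *
          ((max (b - k * a) 0 ^ (n + 1) - max (b - (k + 1) * a) 0 ^ (n + 1)) / (n + 1))
      = (↑(n+1) : ℝ)⁻¹ *
          ((∑ k ∈ range (n + 1), (-1 : ℝ) ^ k * n.choose k * max (b - k * a) 0 ^ (n+1))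
          - ∑ k ∈ range (n + 1), (-1 : ℝ) ^ k * n.choose k * max (b - (k + 1) * a) 0 ^ (n+1)) := by
    rw [← Finset.sum_sub_distrib, Finset.mul_sum]
    refine Finset.sum_congr rfl fun k _ => ?_
    push_cast
    ring
  rw [expand]
  have := sum_step n (fun k => max (b - k * a) 0 ^ (n + 1))
  push_cast at this
  rw [← this, Nat.factorial_succ, Nat.cast_mul, mul_inv, ← mul_assoc]
  congr 1
  push_cast
  ring

/-- The intersection set. -/
def Sset (m : ℕ) (b a : ℝ) : Set (Fin m → ℝ) :=
  {x | ((∀ i, 0 ≤ x i) ∧ (∑ i, x i) ≤ b) ∧ ∀ i, x i ∈ Set.Icc 0 a}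

lemma measurableSet_Sset (m : ℕ) (b a : ℝ) : MeasurableSet (Sset m b a) := by
  unfold Sset
  simp only [Set.setOf_and, Set.setOf_forall]
  refine MeasurableSet.inter (MeasurableSet.inter ?_ ?_) ?_
  · exact MeasurableSet.iInter fun i =>
      measurableSet_le measurable_const (measurable_pi_apply i)
  · exact measurableSet_le (Finset.measurable_sum _ fun i _ => measurable_pi_apply i)
      measurable_const
  · exact MeasurableSet.iInter fun i =>
      (measurable_pi_apply i) measurableSet_Icc

lemma main_lemma {a : ℝ} (ha : 0 < a) :
    ∀ n : ℕ, 1 ≤ n → ∀ b : ℝ,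
      volume (Sset n b a) = ENNReal.ofReal (fvol a n b) ∧ 0 ≤ fvol a n b := by
  intro n hn
  induction n, hn using Nat.le_induction with
  | base =>
    intro b
    have hf1 : fvol a 1 b = max b 0 - max (b - a) 0 := by
      unfold fvol
      simp [Finset.sum_range_succ]
      ring
    constructor
    · have e := MeasurableEquiv.funUnique (Fin 1) ℝ
      have mp := volume_preserving_funUnique (Fin 1) ℝ
      have hset : Sset 1 b a
          = (MeasurableEquiv.funUnique (Fin 1) ℝ) ⁻¹' Set.Icc 0 (min b a) := by
        ext x
        simp only [Sset, Set.mem_setOf_eq, Set.mem_preimage,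
          MeasurableEquiv.funUnique_apply, Set.mem_Icc, le_min_iff,
          Fin.forall_fin_one, Fin.sum_univ_one]
        constructor
        · rintro ⟨⟨h0, hb⟩, _, hA⟩
          exact ⟨h0, hb, hA⟩
        · rintro ⟨h0, hb, hA⟩
          exact ⟨⟨h0, hb⟩, h0, hA⟩
      erw [hset, mp.measure_preimage (measurableSet_Icc (a := (0:ℝ)) (b := min b a)).nullMeasurableSet, Real.volume_Icc,
        hf1]
      rcases le_total b 0 with hb | hb
      · rw [ENNReal.ofReal_of_nonpos (by simp [min_le_iff]; left; linarith),
          max_eq_right hb, max_eq_right (by linarith)]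
        simp
      · rcases le_total b a with hba | hba
        · rw [min_eq_left hba, max_eq_left hb, max_eq_right (by linarith)]
        · rw [min_eq_right hba, max_eq_left hb, max_eq_left (by linarith)]
          norm_num
    · have hf1 : fvol a 1 b = max b 0 - max (b - a) 0 := hf1
      rw [hf1, sub_nonneg]
      exact max_le_max (by linarith) le_rfl
  | succ n hn IH =>
    intro b
    have hn0 : n ≠ 0 := by omega
    constructor
    · -- volume computation via Fubini
      set e := MeasurableEquiv.piFinSuccAbove (fun _ : Fin (n + 1) => ℝ) 0 with he
      have mp := volume_preserving_piFinSuccAbove (fun _ : Fin (n + 1) => ℝ) 0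
      have hS : MeasurableSet (Sset (n + 1) b a) := measurableSet_Sset _ _ _
      set T := e.symm ⁻¹' (Sset (n + 1) b a) with hT
      have hcons : ∀ (t : ℝ) (y : Fin n → ℝ), e.symm (t, y) = Fin.cons t y := by
        intro t y
        simp [he, MeasurableEquiv.piFinSuccAbove_symm_apply, Fin.insertNth_zero',
          Fin.consEquiv]
      have hTm : MeasurableSet T := e.symm.measurable hS
      have hpre : Sset (n + 1) b a = e ⁻¹' T := by
        ext x
        simp [hT]
      rw [hpre, mp.measure_preimage hTm.nullMeasurableSet, Measure.volume_eq_prod,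
        Measure.prod_apply hTm]
      have hslice : ∀ t : ℝ, volume (Prod.mk t ⁻¹' T)
          = Set.indicator (Set.Icc 0 a)
              (fun t => ENNReal.ofReal (fvol a n (b - t))) t := by
        intro t
        by_cases htm : t ∈ Set.Icc 0 a
        · rw [Set.indicator_of_mem htm]
          have hset : (Prod.mk t ⁻¹' T) = Sset n (b - t) a := by
            ext y
            simp only [hT, Set.mem_preimage, hcons, Sset, Set.mem_setOf_eq,
              Fin.forall_fin_succ, Fin.cons_zero, Fin.cons_succ, Fin.sum_univ_succ,
              Set.mem_Icc]
            obtain ⟨ht0, hta⟩ := htm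
            constructor
            · rintro ⟨⟨⟨_, hy0⟩, hsum⟩, _, hyA⟩
              exact ⟨⟨hy0, by linarith⟩, hyA⟩
            · rintro ⟨⟨hy0, hsum⟩, hyA⟩
              exact ⟨⟨⟨ht0, hy0⟩, by linarith⟩, ⟨ht0, hta⟩, hyA⟩
          rw [hset]
          exact (IH (b - t)).1
        · rw [Set.indicator_of_notMem htm]
          have hset : (Prod.mk t ⁻¹' T) = (∅ : Set (Fin n → ℝ)) := by
            ext y
            simp only [hT, Set.mem_preimage, hcons, Sset, Set.mem_setOf_eq,
              Fin.forall_fin_succ, Fin.cons_zero, Fin.cons_succ, Set.mem_Icc,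
              Set.mem_empty_iff_false, iff_false]
            rintro ⟨⟨⟨ht0, _⟩, _⟩, ⟨ht0', hta⟩, _⟩
            exact htm ⟨ht0, hta⟩
          rw [hset, measure_empty]
      simp_rw [hslice]
      rw [lintegral_indicator measurableSet_Icc _]
      rw [← ofReal_integral_eq_lintegral_ofReal]
      · rw [MeasureTheory.integral_Icc_eq_integral_Ioc,
          ← intervalIntegral.integral_of_le ha.le, fvol_rec ha hn0 b]
      · exact ((fvol_cont a n).comp (continuous_const.sub continuous_id)).integrableOn_Icc
      · exact Filter.Eventually.of_forall fun t => (IH (b - t)).2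
    · rw [← fvol_rec ha hn0 b]
      exact intervalIntegral.integral_nonneg ha.le fun t _ => (IH (b - t)).2

/-- Volume of the intersection of the corner simplex with the cube [0,a]^n. -/
theorem simplex_cube_volume (n : ℕ) (b a : ℝ) (hb : 0 < b) (ha : 0 < a) :
    volume {x : Fin n → ℝ |
        ((∀ i, 0 ≤ x i) ∧ (∑ i, x i) ≤ b) ∧ ∀ i, x i ∈ Set.Icc 0 a} =
      ENNReal.ofReal ((n ! : ℝ)⁻¹ * ∑ k ∈ Finset.range (n + 1),
        (-1 : ℝ) ^ k * n.choose k * max (b - k * a) 0 ^ n) := by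
  rcases Nat.eq_zero_or_pos n with hn | hn
  · subst hn
    have huniv : {x : Fin 0 → ℝ |
        ((∀ i, 0 ≤ x i) ∧ (∑ i, x i) ≤ b) ∧ ∀ i, x i ∈ Set.Icc 0 a} = Set.univ :=
      Set.eq_univ_of_forall fun x =>
        ⟨⟨fun i => i.elim0, by simp [hb.le]⟩, fun i => i.elim0⟩
    rw [huniv, volume_pi, Measure.pi_univ]
    simp
  · exact (main_lemma ha n hn b).1
end
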